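/- Let Θ be an m×m real symmetric positive semidefinite matrix, λ > 0, V = (λ/2)I + Θ (which is invertible), and Y, M₀ ∈ ℝ^m. Then the function M(t) = M₀ + (I − exp(−2tV)) V^{−1} Θ (Y − M₀) is the unique solution of the linear ODE ∂_t M(t) = −2Θ(M(t) − Y) − λ(M(t) − M₀) with initial condition M(0) = M₀. -/

import Mathlib

open Matrix

noncomputable def mvCLM {m : ℕ} :
    Matrix (Fin m) (Fin m) ℝ →ₗ[ℝ] ((Fin m → ℝ) →L[ℝ] (Fin m → ℝ)) where
  toFun A := LinearMap.toContinuousLinearMap A.mulVecLin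
  map_add' A B := by ext v; simp [Matrix.add_mulVec]
  map_smul' c A := by ext v; simp [Matrix.smul_mulVec]

lemma hasDerivAt_exp_mulVec {m : ℕ} (A : Matrix (Fin m) (Fin m) ℝ)
    {D : ℝ → Fin m → ℝ} {D' : Fin m → ℝ} {t : ℝ} (hD : HasDerivAt D D' t) :
    HasDerivAt (fun u => NormedSpace.exp (u • A) *ᵥ D u)
      ((NormedSpace.exp (t • A) * A) *ᵥ D t + NormedSpace.exp (t • A) *ᵥ D') t := by
  letI : SeminormedRing (Matrix (Fin m) (Fin m) ℝ) := Matrix.linftyOpSemiNormedRing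
  letI : NormedRing (Matrix (Fin m) (Fin m) ℝ) := Matrix.linftyOpNormedRing
  letI : NormedAlgebra ℝ (Matrix (Fin m) (Fin m) ℝ) := Matrix.linftyOpNormedAlgebra
  have hexp : HasDerivAt (fun u : ℝ => NormedSpace.exp (u • A))
      (NormedSpace.exp (t • A) * A) t := hasDerivAt_exp_smul_const A t
  have hφ := (mvCLM (m := m)).toContinuousLinearMap.hasFDerivAt.comp_hasDerivAt t hexp
  have := hφ.clm_apply hD
  exact this

lemma exp_mul_exp_neg {m : ℕ} (X : Matrix (Fin m) (Fin m) ℝ) :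
    NormedSpace.exp X * NormedSpace.exp (-X) = 1 := by
  rw [← Matrix.exp_add_of_commute X (-X) (Commute.neg_right (Commute.refl X)),
    add_neg_cancel, NormedSpace.exp_zero]

theorem stmt13 {m : ℕ} (Θ : Matrix (Fin m) (Fin m) ℝ)
    (hsym : Θ.IsSymm) (hpsd : Θ.PosSemidef)
    (lam : ℝ) (hlam : 0 < lam) (Y M₀ : Fin m → ℝ)
    (V : Matrix (Fin m) (Fin m) ℝ)
    (hV : V = (lam / 2) • (1 : Matrix (Fin m) (Fin m) ℝ) + Θ)
    (M : ℝ → Fin m → ℝ)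
    (hM : ∀ t : ℝ, M t =
      M₀ + ((1 - NormedSpace.exp (-((2 * t) • V))) * (V⁻¹ * Θ)) *ᵥ (Y - M₀)) :
    IsUnit V ∧
    M 0 = M₀ ∧
    (∀ t : ℝ, HasDerivAt M (-((2 : ℝ) • (Θ *ᵥ (M t - Y))) - lam • (M t - M₀)) t) ∧
    (∀ N : ℝ → Fin m → ℝ, N 0 = M₀ →
      (∀ t : ℝ, HasDerivAt N (-((2 : ℝ) • (Θ *ᵥ (N t - Y))) - lam • (N t - M₀)) t) →
      N = M) := by
  -- V is positive definite, hence a unit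
  have h1pd : ((lam / 2) • (1 : Matrix (Fin m) (Fin m) ℝ)).PosDef := by
    have hd : (lam / 2) • (1 : Matrix (Fin m) (Fin m) ℝ)
        = Matrix.diagonal (fun _ => lam / 2) := by
      ext i j
      by_cases h : i = j <;> simp [Matrix.one_apply, Matrix.diagonal, h]
    rw [hd]
    exact Matrix.PosDef.diagonal (fun _ => by positivity)
  have hVpd : V.PosDef := by rw [hV]; exact h1pd.add_posSemidef hpsd
  have hVunit : IsUnit V := hVpd.isUnit
  have hVV : V * V⁻¹ = 1 :=
    Matrix.mul_nonsing_inv V ((Matrix.isUnit_iff_isUnit_det V).mp hVunit)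
  -- notation
  set A : Matrix (Fin m) (Fin m) ℝ := (-2 : ℝ) • V with hAdef
  have hA : ∀ u : ℝ, -((2 * u) • V) = u • A := by
    intro u
    rw [hAdef, smul_smul, show u * (-2 : ℝ) = -(2 * u) by ring, neg_smul]
  set w : Fin m → ℝ := Y - M₀ with hw
  set c : Fin m → ℝ := (V⁻¹ * Θ) *ᵥ w with hc
  set E : ℝ → Matrix (Fin m) (Fin m) ℝ := fun u => NormedSpace.exp (u • A) with hE
  have hM' : M = fun u => (M₀ + c) - E u *ᵥ c := by
    funext u
    rw [hM u, hA u]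
    rw [Matrix.sub_mul, Matrix.one_mul, Matrix.sub_mulVec,
      ← Matrix.mulVec_mulVec w (NormedSpace.exp (u • A)) (V⁻¹ * Θ)]
    simp only [hE, hc]
    abel
  -- M 0 = M₀
  have hM0 : M 0 = M₀ := by
    rw [hM']
    simp [hE, NormedSpace.exp_zero]
  -- key identity
  have k1 : ∀ x : Fin m → ℝ, (2 : ℝ) • (V *ᵥ x) = (2 : ℝ) • (Θ *ᵥ x) + lam • x := by
    intro x
    rw [hV, Matrix.add_mulVec, Matrix.smul_mulVec, Matrix.one_mulVec, smul_add,
      smul_smul, show (2 : ℝ) * (lam / 2) = lam by ring]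
    abel
  have hVc : V *ᵥ c = Θ *ᵥ w := by
    rw [hc, Matrix.mulVec_mulVec, ← Matrix.mul_assoc, hVV, Matrix.one_mul]
  -- commutation
  have hcomm : ∀ u : ℝ, E u * V = V * E u := by
    intro u
    have h1 : Commute V (u • A) := ((Commute.refl V).smul_right (-2 : ℝ)).smul_right u
    exact (h1.exp_right).symm.eq
  -- derivative of M
  have hderiv : ∀ t : ℝ,
      HasDerivAt M (-((2 : ℝ) • (Θ *ᵥ (M t - Y))) - lam • (M t - M₀)) t := by
    intro t
    have hbase : HasDerivAt (fun u => (M₀ + c) - E u *ᵥ c)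
        (0 - ((E t * A) *ᵥ c + E t *ᵥ (0 : Fin m → ℝ))) t :=
      (hasDerivAt_const t (M₀ + c)).sub (hasDerivAt_exp_mulVec A (hasDerivAt_const t c))
    rw [hM']
    convert hbase using 1
    -- equality of the derivative values
    rw [Matrix.mulVec_zero, add_zero, zero_sub]
    have hMt1 : ((M₀ + c) - E t *ᵥ c) - Y = (c - E t *ᵥ c) - w := by
      rw [hw]; abel
    have hMt2 : ((M₀ + c) - E t *ᵥ c) - M₀ = c - E t *ᵥ c := by abel
    rw [hMt1, hMt2]
    have hEA : E t * A = (-2 : ℝ) • (E t * V) := by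
      rw [hAdef, Matrix.mul_smul]
    rw [hEA, Matrix.smul_mulVec, neg_smul, neg_neg]
    have h2 : (E t * V) *ᵥ c = V *ᵥ (E t *ᵥ c) := by
      rw [hcomm t, ← Matrix.mulVec_mulVec]
    rw [h2]
    have k2 := k1 (E t *ᵥ c)
    have k3 := k1 c
    rw [hVc] at k3
    rw [k2, Matrix.mulVec_sub, Matrix.mulVec_sub, smul_sub, smul_sub, smul_sub, k3]
    abel
  refine ⟨hVunit, hM0, hderiv, ?_⟩
  -- uniqueness
  intro N hN0 hNd
  have hD : ∀ t : ℝ, HasDerivAt (fun u => N u - M u) (A *ᵥ (N t - M t)) t := by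
    intro t
    have h := (hNd t).sub (hderiv t)
    convert h using 1
    case e'_4 => rfl
    case e'_5 => rfl
    case e'_6 => rfl
    case e'_8 => rfl
    have hAm : A *ᵥ (N t - M t) = -((2 : ℝ) • (V *ᵥ (N t - M t))) := by
      rw [hAdef, Matrix.smul_mulVec, show (-2 : ℝ) = -(2:ℝ) by norm_num, neg_smul]
    rw [hAm, k1 (N t - M t)]
    rw [Matrix.mulVec_sub, Matrix.mulVec_sub, Matrix.mulVec_sub]
    simp only [smul_sub]
    abel
  have hG : ∀ t : ℝ, HasDerivAt (fun u => NormedSpace.exp (u • (-A)) *ᵥ (N u - M u))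
      (0 : Fin m → ℝ) t := by
    intro t
    have h := hasDerivAt_exp_mulVec (-A) (hD t)
    convert h using 1
    rw [Matrix.mul_neg, Matrix.neg_mulVec, Matrix.mulVec_mulVec]
    abel
  have hconst := is_const_of_deriv_eq_zero
    (f := fun u => NormedSpace.exp (u • (-A)) *ᵥ (N u - M u))
    (fun x => (hG x).differentiableAt) (fun x => (hG x).deriv)
  funext u
  have h0 : NormedSpace.exp (u • (-A)) *ᵥ (N u - M u) = 0 := by
    have := hconst u 0
    simpa [hN0, hM0, NormedSpace.exp_zero] using this
  have : N u - M u = 0 := by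
    have h2 : NormedSpace.exp (u • A) *ᵥ (NormedSpace.exp (u • (-A)) *ᵥ (N u - M u))
        = N u - M u := by
      rw [Matrix.mulVec_mulVec, smul_neg, exp_mul_exp_neg, Matrix.one_mulVec]
    rw [h0, Matrix.mulVec_zero] at h2
    exact h2.symm
  exact sub_eq_zero.mp this
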